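/- Let (L₁, L₂, P, (⊛ᵢ, ↙ⁱ, ↖ᵢ)_{i∈I}) be a multi-adjoint property-oriented frame, (X, Y, φ, τ) a context of this frame, and φ*, φ_* the associated operators. Then φ_* restricted to Fix(φ*∘φ_*) = { μ : X → L₁ ∣ φ*(φ_* μ) = μ } and φ* restricted to Fix(φ_*∘φ*) = { λ : Y → L₂ ∣ φ_*(φ* λ) = λ } are mutually inverse, order-preserving bijections between these two fixed-point sets (each taken with the pointwise order). -/
import Mathlib


/-- `φ_*` and `φ*` restrict to mutually inverse, order-preserving
bijections between the fixed points of `φ* ∘ φ_*` and those of `φ_* ∘ φ*`. -/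
theorem stmt_13 {L₁ L₂ P : Type*} [CompleteLattice L₁] [CompleteLattice L₂]
    [CompleteLattice P] {I : Type*}
    (w : I → P → L₂ → L₁) (ld : I → L₁ → L₂ → P) (lu : I → L₁ → P → L₂)
    (adj : ∀ (i : I) (z : P) (y : L₂) (x : L₁),
      (w i z y ≤ x ↔ z ≤ ld i x y) ∧ (w i z y ≤ x ↔ y ≤ lu i x z))
    {X Y : Type*} (φ : X → Y → P) (τ : Y → I)
    (star : (Y → L₂) → X → L₁) (lstar : (X → L₁) → Y → L₂)
    (hstar : ∀ (lam : Y → L₂) (x : X), star lam x = ⨆ y, w (τ y) (φ x y) (lam y))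
    (hlstar : ∀ (μ : X → L₁) (y : Y), lstar μ y = ⨅ x, lu (τ y) (μ x) (φ x y)) :
    ∃ (f : {μ : X → L₁ // star (lstar μ) = μ} → {lam : Y → L₂ // lstar (star lam) = lam})
      (g : {lam : Y → L₂ // lstar (star lam) = lam} → {μ : X → L₁ // star (lstar μ) = μ}),
      -- `f` is the restriction of `φ_*` and `g` is the restriction of `φ*`
      (∀ μ, (f μ : Y → L₂) = lstar μ) ∧
      (∀ lam, (g lam : X → L₁) = star lam) ∧
      -- they are mutually inverse (hence bijections)
      Function.LeftInverse g f ∧ Function.RightInverse g f ∧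
      -- and order-preserving
      (∀ μ μ', μ ≤ μ' → f μ ≤ f μ') ∧
      (∀ lam lam', lam ≤ lam' → g lam ≤ g lam') := by
  -- monotonicity of w in its L₂ argument
  have wmono : ∀ (i : I) (z : P) {a b : L₂}, a ≤ b → w i z a ≤ w i z b := by
    intro i z a b hab
    exact ((adj i z a (w i z b)).2).mpr (hab.trans (((adj i z b (w i z b)).2).mp le_rfl))
  -- monotonicity of lu in its L₁ argument
  have lumono : ∀ (i : I) (z : P) {a b : L₁}, a ≤ b → lu i a z ≤ lu i b z := by
    intro i z a b hab
    exact ((adj i z (lu i a z) b).2).mp ((((adj i z (lu i a z) a).2).mpr le_rfl).trans hab)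
  have starmono : ∀ {lam lam' : Y → L₂}, lam ≤ lam' → star lam ≤ star lam' := by
    intro lam lam' h x
    rw [hstar, hstar]
    exact iSup_mono fun y => wmono _ _ (h y)
  have lstarmono : ∀ {μ μ' : X → L₁}, μ ≤ μ' → lstar μ ≤ lstar μ' := by
    intro μ μ' h y
    rw [hlstar, hlstar]
    exact iInf_mono fun x => lumono _ _ (h x)
  refine ⟨fun μ => ⟨lstar μ.1, by rw [μ.2]⟩, fun lam => ⟨star lam.1, by rw [lam.2]⟩,
    fun μ => rfl, fun lam => rfl, ?_, ?_, ?_, ?_⟩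
  · intro μ; exact Subtype.ext μ.2
  · intro lam; exact Subtype.ext lam.2
  · intro μ μ' h; exact lstarmono h
  · intro lam lam' h; exact starmono h
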